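/- Let α > 0 and K ≥ 1 be real numbers with α² ≥ K/4, and define the diminishing-exploration start times by u(1) = ⌈(α − K/(4α))²⌉ and u(j) = ⌈u(j−1) + (K/α)·√(u(j−1)) + K²/(4α²)⌉ for j ≥ 2. If S ≥ 0 is a real number and m ≥ 1 is an integer with u(m) ≤ S, then m·K ≤ 2α·√S − 2α² + (3/2)·K. Consequently the number m of exploration sessions started within S time steps after a reset satisfies m ≤ (2α·√S)/K + 3/2, and the total number of exploration pulls m·K (which upper bounds the exploration regret when rewards lie in [0,1]) satisfies m·K ≤ 2α·√S + (3/2)·K. -/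

import Mathlib

/-- Deterministic core of the diminishing-exploration regret lemma: if `α > 0`, `K ≥ 1`,
`α² ≥ K/4`, `S ≥ 0`, `m ≥ 1` and `u m ≤ S`, then `mK ≤ 2α√S − 2α² + (3/2)K`, hence
`m ≤ 2α√S/K + 3/2` and `mK ≤ 2α√S + (3/2)K`. -/
theorem diminishing_exploration_regret_bound
    (α K : ℝ) (hα : 0 < α) (hK : 1 ≤ K) (hαK : K / 4 ≤ α ^ 2)
    (u : ℕ → ℤ)
    (hu1 : u 1 = ⌈(α - K / (4 * α)) ^ 2⌉)
    (hu : ∀ j : ℕ, 2 ≤ j →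
      u j = ⌈(u (j - 1) : ℝ) + (K / α) * Real.sqrt ((u (j - 1) : ℝ)) + K ^ 2 / (4 * α ^ 2)⌉)
    (S : ℝ) (hS : 0 ≤ S) (m : ℕ) (hm : 1 ≤ m) (hmS : (u m : ℝ) ≤ S) :
    (m : ℝ) * K ≤ 2 * α * Real.sqrt S - 2 * α ^ 2 + (3 / 2) * K
      ∧ (m : ℝ) ≤ 2 * α * Real.sqrt S / K + 3 / 2
      ∧ (m : ℝ) * K ≤ 2 * α * Real.sqrt S + (3 / 2) * K := by
  have h0 : (0:ℝ) ≤ α - K / (4 * α) := by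
    rw [sub_nonneg, div_le_iff₀ (by positivity)]
    nlinarith
  have key : ∀ j : ℕ, 1 ≤ j → 0 ≤ (u j : ℝ) ∧
      α - K / (4 * α) + ((j : ℝ) - 1) * (K / (2 * α)) ≤ Real.sqrt (u j) := by
    intro j hj
    induction j with
    | zero => omega
    | succ n ih =>
      rcases eq_or_lt_of_le hj with h1 | h2
      · have hn : n = 0 := by omega
        subst hn
        have hbase : ((α - K / (4 * α)) ^ 2 : ℝ) ≤ (u 1 : ℝ) := by
          rw [hu1]; exact_mod_cast Int.le_ceil _
        refine ⟨le_trans (sq_nonneg _) hbase, ?_⟩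
        have hs := Real.sqrt_le_sqrt hbase
        rw [Real.sqrt_sq h0] at hs
        simpa using hs
      · have hn : 1 ≤ n := by omega
        obtain ⟨hnn, hsq⟩ := ih hn
        have hrec : (Real.sqrt (u n) + K / (2 * α)) ^ 2 ≤ (u (n + 1) : ℝ) := by
          have h := hu (n + 1) (by omega)
          simp only [Nat.add_sub_cancel] at h
          rw [h]
          have hceil : ((u n : ℝ) + (K / α) * Real.sqrt (u n) + K ^ 2 / (4 * α ^ 2) : ℝ)
              ≤ ((⌈((u n : ℝ) + (K / α) * Real.sqrt (u n) + K ^ 2 / (4 * α ^ 2))⌉ : ℤ) : ℝ) :=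
            Int.le_ceil _
          have hsqsq : Real.sqrt (u n) ^ 2 = (u n : ℝ) := Real.sq_sqrt hnn
          have hexp : (Real.sqrt (u n) + K / (2 * α)) ^ 2
              = (u n : ℝ) + (K / α) * Real.sqrt (u n) + K ^ 2 / (4 * α ^ 2) := by
            have e : (Real.sqrt (u n) + K / (2 * α)) ^ 2
                = Real.sqrt (u n) ^ 2 + (K / α) * Real.sqrt (u n) + K ^ 2 / (4 * α ^ 2) := by
              field_simp
              ring
            rw [e, hsqsq]
          linarith
        refine ⟨le_trans (sq_nonneg _) hrec, ?_⟩
        have hpos : 0 ≤ Real.sqrt (u n) + K / (2 * α) := by positivity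
        have hs := Real.sqrt_le_sqrt hrec
        rw [Real.sqrt_sq hpos] at hs
        have : α - K / (4 * α) + ((n : ℝ) - 1) * (K / (2 * α)) + K / (2 * α)
            ≤ Real.sqrt (u (n + 1)) := by linarith
        push_cast
        ring_nf
        ring_nf at this
        linarith
  obtain ⟨hum, hsq⟩ := key m hm
  have hSm : Real.sqrt (u m) ≤ Real.sqrt S := Real.sqrt_le_sqrt hmS
  have hmain : (m : ℝ) * K ≤ 2 * α * Real.sqrt S - 2 * α ^ 2 + (3 / 2) * K := by
    have h2 : α - K / (4 * α) + ((m : ℝ) - 1) * (K / (2 * α)) ≤ Real.sqrt S := le_trans hsq hSm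
    have hα' : (0:ℝ) ≤ 2 * α := by linarith
    have h3 := mul_le_mul_of_nonneg_left h2 hα'
    have e : 2 * α * (α - K / (4 * α) + ((m : ℝ) - 1) * (K / (2 * α)))
        = 2 * α ^ 2 - K / 2 + ((m : ℝ) - 1) * K := by
      field_simp
      ring
    rw [e] at h3
    linarith
  refine ⟨hmain, ?_, ?_⟩
  · have hKpos : (0:ℝ) < K := by linarith
    rw [div_add' _ _ _ (ne_of_gt hKpos), le_div_iff₀ hKpos]
    nlinarith [sq_nonneg α]
  · nlinarith [sq_nonneg α]
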